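/- For every integer n ≥ 1, the alternating sum ∑_{k=0}^{n} (−1)^k · C(n,k) · C(2n+1+k, n+1+k)/(2n+1+k) equals 0 (as a rational number). -/

import Mathlib

open Finset

lemma inner_zero (n j : ℕ) (hj : j < n) :
    ∑ k ∈ Finset.range (n + 1), (-1 : ℚ) ^ k * (n.choose k : ℚ) * (k.choose j : ℚ) = 0 := by
  have hjn : j ≤ n := hj.le
  rw [Finset.range_eq_Ico, ← Finset.sum_Ico_consecutive _ (Nat.zero_le j) (by omega : j ≤ n + 1)]
  have h0 : ∑ k ∈ Finset.Ico 0 j, (-1 : ℚ) ^ k * (n.choose k : ℚ) * (k.choose j : ℚ) = 0 := by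
    apply Finset.sum_eq_zero
    intro k hk
    simp only [Finset.mem_Ico] at hk
    rw [Nat.choose_eq_zero_of_lt hk.2]
    simp
  rw [h0, zero_add, Finset.sum_Ico_eq_sum_range]
  have hrange : n + 1 - j = (n - j) + 1 := by omega
  rw [hrange]
  have hterm : ∀ m ∈ Finset.range (n - j + 1),
      (-1 : ℚ) ^ (j + m) * (n.choose (j + m) : ℚ) * ((j + m).choose j : ℚ)
        = ((-1 : ℚ) ^ j * (n.choose j : ℚ)) * ((-1 : ℚ) ^ m * ((n - j).choose m : ℚ)) := by
    intro m hm
    simp only [Finset.mem_range] at hm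
    have hc := Nat.choose_mul (n := n) (show j ≤ j + m by omega)
    have hc' : (n.choose (j + m) : ℚ) * ((j + m).choose j : ℚ)
        = (n.choose j : ℚ) * ((n - j).choose (j + m - j) : ℚ) := by exact_mod_cast congrArg (fun m : ℕ => (m : ℚ)) hc
    rw [pow_add, mul_assoc, hc']
    have : j + m - j = m := by omega
    rw [this]; ring
  rw [Finset.sum_congr rfl hterm, ← Finset.mul_sum]
  have halt : ∑ m ∈ Finset.range (n - j + 1), (-1 : ℚ) ^ m * ((n - j).choose m : ℚ) = 0 := by
    have := Int.alternating_sum_range_choose_of_ne (show n - j ≠ 0 by omega)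
    have := congrArg (fun z : ℤ => (z : ℚ)) this
    push_cast at this
    simpa using this
  rw [halt, mul_zero]

lemma key_sum (n : ℕ) (hn : 1 ≤ n) :
    ∑ k ∈ Finset.range (n + 1),
      (-1 : ℚ) ^ k * (n.choose k : ℚ) * ((2 * n + k).choose (n - 1) : ℚ) = 0 := by
  have hexp : ∀ k, ((2 * n + k).choose (n - 1) : ℚ)
      = ∑ ij ∈ Finset.HasAntidiagonal.antidiagonal (n - 1),
          ((2 * n).choose ij.1 : ℚ) * (k.choose ij.2 : ℚ) := by
    intro k
    rw [Nat.add_choose_eq]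
    push_cast
    rfl
  calc ∑ k ∈ Finset.range (n + 1),
        (-1 : ℚ) ^ k * (n.choose k : ℚ) * ((2 * n + k).choose (n - 1) : ℚ)
      = ∑ k ∈ Finset.range (n + 1), ∑ ij ∈ Finset.HasAntidiagonal.antidiagonal (n - 1),
          ((2 * n).choose ij.1 : ℚ) * ((-1 : ℚ) ^ k * (n.choose k : ℚ) * (k.choose ij.2 : ℚ)) := by
        refine Finset.sum_congr rfl fun k _ => ?_
        rw [hexp k, Finset.mul_sum]
        refine Finset.sum_congr rfl fun ij _ => by ring
    _ = ∑ ij ∈ Finset.HasAntidiagonal.antidiagonal (n - 1), ((2 * n).choose ij.1 : ℚ) *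
          ∑ k ∈ Finset.range (n + 1), (-1 : ℚ) ^ k * (n.choose k : ℚ) * (k.choose ij.2 : ℚ) := by
        rw [Finset.sum_comm]
        refine Finset.sum_congr rfl fun ij _ => by rw [Finset.mul_sum]
    _ = 0 := by
        apply Finset.sum_eq_zero
        intro ij hij
        rw [Finset.HasAntidiagonal.mem_antidiagonal] at hij
        rw [inner_zero n ij.2 (by omega), mul_zero]

/-- For every integer `n ≥ 1`, the alternating sum
`∑_{k=0}^{n} (−1)^k · C(n,k) · C(2n+1+k, n+1+k)/(2n+1+k)` equals `0` in `ℚ`. -/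
theorem stmt_1 (n : ℕ) (hn : 1 ≤ n) :
    ∑ k ∈ Finset.range (n + 1),
      (-1 : ℚ) ^ k * (n.choose k : ℚ) * ((2 * n + 1 + k).choose (n + 1 + k) : ℚ) /
        (2 * n + 1 + k) = 0 := by
  have hn0 : (n : ℚ) ≠ 0 := by exact_mod_cast (by omega : n ≠ 0)
  have hterm : ∀ k, ((2 * n + 1 + k).choose (n + 1 + k) : ℚ) / ((2 : ℚ) * n + 1 + k)
      = ((2 * n + k).choose (n - 1) : ℚ) / n := by
    intro k
    have hnat : n * (2 * n + 1 + k).choose (n + 1 + k)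
        = (2 * n + 1 + k) * ((2 * n + k).choose (n - 1)) := by
      have hsymm : (2 * n + 1 + k).choose (n + 1 + k) = (2 * n + 1 + k).choose n := by
        rw [← Nat.choose_symm (by omega : n + 1 + k ≤ 2 * n + 1 + k)]
        congr 1
        omega
      have hsucc : Nat.succ (2 * n + k) * (2 * n + k).choose (n - 1) = (Nat.succ (2 * n + k)).choose (Nat.succ (n - 1)) * Nat.succ (n - 1) := Nat.add_one_mul_choose_eq (2 * n + k) (n - 1)
      have h1 : Nat.succ (2 * n + k) = 2 * n + 1 + k := by omega
      have h2 : Nat.succ (n - 1) = n := by omega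
      rw [h1, h2] at hsucc
      rw [hsymm, hsucc]; exact Nat.mul_comm _ _
    have hq : (n : ℚ) * ((2 * n + 1 + k).choose (n + 1 + k) : ℚ)
        = ((2 : ℚ) * n + 1 + k) * ((2 * n + k).choose (n - 1) : ℚ) := by
      exact_mod_cast congrArg (fun m : ℕ => (m : ℚ)) hnat
    have hden : (2 : ℚ) * n + 1 + k ≠ 0 := by positivity
    field_simp
    linarith [hq]
  calc ∑ k ∈ Finset.range (n + 1),
        (-1 : ℚ) ^ k * (n.choose k : ℚ) * ((2 * n + 1 + k).choose (n + 1 + k) : ℚ) /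
          (2 * n + 1 + k)
      = ∑ k ∈ Finset.range (n + 1),
          (-1 : ℚ) ^ k * (n.choose k : ℚ) * ((2 * n + k).choose (n - 1) : ℚ) / n := by
        refine Finset.sum_congr rfl fun k _ => ?_
        rw [mul_div_assoc, mul_div_assoc]
        congr 1
        have := hterm k
        push_cast at this ⊢
        exact this
    _ = (∑ k ∈ Finset.range (n + 1),
          (-1 : ℚ) ^ k * (n.choose k : ℚ) * ((2 * n + k).choose (n - 1) : ℚ)) / n := by
        rw [Finset.sum_div]
    _ = 0 := by rw [key_sum n hn, zero_div]
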